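/- For all α, γ ∈ ℝ and every integer j ≥ 1, writing q⁽ʲ⁾ = (Q¹)ʲ · Q⁴ = ⟨q₁,q₂,q₃,q₄⟩ and x = c_γ·s_α, the three imaginary components satisfy: q₂ = (−1)^{j−1}·s_γ·c_α·[ U_{2j+1}(x) + 2·U_{2j−1}(x) ], q₃ = (−1)^{j−1}·s_γ·[ 2·c_γ·U_{2j}(x) − s_α·( U_{2j+1}(x) + 2·U_{2j−1}(x) ) ], and q₄ = (−1)^{j−1}·c_α·c_γ·U_{2j+1}(x). -/

import Mathlib

open Quaternion Polynomial Polynomial.Chebyshev Real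

/-- Quaternion representation of the atomic rotation in atom `P₁` (with `β = α`). -/
noncomputable def Q1 (α γ : ℝ) : ℍ[ℝ] :=
  ⟨cos (α/2)^2 - cos γ * sin (α/2)^2,
   cos (α/2) * sin (α/2) * sin γ,
   -(sin (α/2)^2) * sin γ,
   sin (α/2) * cos (α/2) * (1 + cos γ)⟩

/-- Quaternion representation of the atomic rotation in atom `P₄` (with `β = α`). -/
noncomputable def Q4 (α γ : ℝ) : ℍ[ℝ] :=
  ⟨1 - 2 * cos (α/2)^2 * cos (γ/2)^2,
   -2 * sin (α/2) * cos (α/2) * sin (γ/2) * cos (γ/2),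
   -2 * cos (α/2)^2 * sin (γ/2) * cos (γ/2),
   -2 * sin (α/2) * cos (α/2) * cos (γ/2)^2⟩

lemma U_eval_add_four (x : ℝ) (n : ℤ) :
    (U ℝ (n+4)).eval x = (4*x^2-2) * (U ℝ (n+2)).eval x - (U ℝ n).eval x := by
  have h2 := congrArg (eval x) (U_add_two ℝ n)
  have h3 := congrArg (eval x) (U_add_two ℝ (n+1))
  have h4 := congrArg (eval x) (U_add_two ℝ (n+2))
  simp only [eval_sub, eval_mul, eval_ofNat, eval_X,
    show n+1+2 = n+3 by ring, show n+2+2 = n+4 by ring,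
    show n+1+1 = n+2 by ring, show n+2+1 = n+3 by ring] at h2 h3 h4
  linear_combination h4 + (2*x)*h3 + h2

lemma quat_sq (a : ℍ[ℝ]) :
    a ^ 2 = (2 * a.re) • a - ((Quaternion.normSq a : ℝ) : ℍ[ℝ]) := by
  have h : a * a = a * (((2 * a.re : ℝ) : ℍ[ℝ]) - star a) := by
    rw [← Quaternion.self_add_star', add_sub_cancel_right]
  rw [sq, h, mul_sub, Quaternion.self_mul_star, Quaternion.mul_coe_eq_smul]

lemma Q1_sq (α γ : ℝ) : Q1 α γ ^ 2 =
    (2*(1-2*(cos (γ/2)*sin (α/2))^2)) • Q1 α γ - 1 := by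
  have hc : cos γ = 2*cos (γ/2)^2 - 1 := by
    rw [show γ = 2*(γ/2) by ring, cos_two_mul]; ring_nf
  have pa : sin (α/2)^2 + cos (α/2)^2 = 1 := sin_sq_add_cos_sq _
  have pg : sin (γ/2)^2 + cos (γ/2)^2 = 1 := sin_sq_add_cos_sq _
  have hre : (2 : ℝ) * (Q1 α γ).re = 2*(1-2*(cos (γ/2)*sin (α/2))^2) := by
    show (2:ℝ) * (cos (α/2)^2 - cos γ * sin (α/2)^2) = _
    rw [hc]; linear_combination 2 * pa
  have hn : Quaternion.normSq (Q1 α γ) = 1 := by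
    have hs : sin γ = 2*sin (γ/2)*cos (γ/2) := by
      rw [show γ = 2*(γ/2) by ring, sin_two_mul]; ring
    rw [Quaternion.normSq_def']
    show (cos (α/2)^2 - cos γ * sin (α/2)^2)^2 + (cos (α/2) * sin (α/2) * sin γ)^2
      + (-(sin (α/2)^2) * sin γ)^2 + (sin (α/2) * cos (α/2) * (1 + cos γ))^2 = 1
    rw [hc, hs]
    linear_combination (1 + sin (α/2)^2 - 4*sin (α/2)^2*cos (γ/2)^2
        + 4*sin (α/2)^2*cos (γ/2)^2*sin (γ/2)^2 + 4*sin (α/2)^2*cos (γ/2)^4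
        + cos (α/2)^2) * pa
      + (4*sin (α/2)^2*cos (γ/2)^2) * pg
  rw [quat_sq, hre, hn]
  norm_num

/-- The statement of the main theorem at a given `j`. -/
def Pst (α γ : ℝ) (j : ℕ) : Prop :=
    (Q1 α γ ^ j * Q4 α γ).imI =
      (-1 : ℝ) ^ (j - 1) * sin (γ/2) * cos (α/2) *
        ((U ℝ (2 * (j : ℤ) + 1)).eval (cos (γ/2) * sin (α/2)) +
          2 * (U ℝ (2 * (j : ℤ) - 1)).eval (cos (γ/2) * sin (α/2))) ∧
    (Q1 α γ ^ j * Q4 α γ).imJ =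
      (-1 : ℝ) ^ (j - 1) * sin (γ/2) *
        (2 * cos (γ/2) * (U ℝ (2 * (j : ℤ))).eval (cos (γ/2) * sin (α/2)) -
          sin (α/2) * ((U ℝ (2 * (j : ℤ) + 1)).eval (cos (γ/2) * sin (α/2)) +
            2 * (U ℝ (2 * (j : ℤ) - 1)).eval (cos (γ/2) * sin (α/2)))) ∧
    (Q1 α γ ^ j * Q4 α γ).imK =
      (-1 : ℝ) ^ (j - 1) * cos (α/2) * cos (γ/2) *
        (U ℝ (2 * (j : ℤ) + 1)).eval (cos (γ/2) * sin (α/2))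

lemma pst_all (α γ : ℝ) : ∀ m : ℕ, Pst α γ (m+1) ∧ Pst α γ (m+2) := by
  have hc : cos γ = 2*cos (γ/2)^2 - 1 := by
    rw [show γ = 2*(γ/2) by ring, cos_two_mul]; ring_nf
  have hs : sin γ = 2*sin (γ/2)*cos (γ/2) := by
    rw [show γ = 2*(γ/2) by ring, sin_two_mul]; ring
  have pa : sin (α/2)^2 + cos (α/2)^2 = 1 := sin_sq_add_cos_sq _
  have pg : sin (γ/2)^2 + cos (γ/2)^2 = 1 := sin_sq_add_cos_sq _
  have e1 : (U ℝ 1).eval (cos (γ/2) * sin (α/2)) = 2*(cos (γ/2) * sin (α/2)) := by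
    simp [U_one]
  have e2 : (U ℝ 2).eval (cos (γ/2) * sin (α/2)) = 4*(cos (γ/2) * sin (α/2))^2-1 := by
    simp [U_two]
  have e3 : (U ℝ 3).eval (cos (γ/2) * sin (α/2))
      = 8*(cos (γ/2) * sin (α/2))^3-4*(cos (γ/2) * sin (α/2)) := by
    have := congrArg (eval (cos (γ/2) * sin (α/2))) (U_add_two ℝ 1)
    norm_num [e1, e2] at this
    rw [this]; ring
  have e4 : (U ℝ 4).eval (cos (γ/2) * sin (α/2))
      = 16*(cos (γ/2) * sin (α/2))^4-12*(cos (γ/2) * sin (α/2))^2+1 := by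
    have := congrArg (eval (cos (γ/2) * sin (α/2))) (U_add_two ℝ 2)
    norm_num [e2, e3] at this
    rw [this]; ring
  have e5 : (U ℝ 5).eval (cos (γ/2) * sin (α/2))
      = 32*(cos (γ/2) * sin (α/2))^5-32*(cos (γ/2) * sin (α/2))^3+6*(cos (γ/2) * sin (α/2)) := by
    have := congrArg (eval (cos (γ/2) * sin (α/2))) (U_add_two ℝ 3)
    norm_num [e3, e4] at this
    rw [this]; ring
  have base1 : Pst α γ 1 := by
    refine ⟨?_, ?_, ?_⟩
    · rw [pow_one, Quaternion.imI_mul]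
      norm_num [Q1, Q4, e1, e3, hc, hs]
      linear_combination (-2*cos (α/2)*sin (α/2)*cos (γ/2)*sin (γ/2)) * pa
    · rw [pow_one, Quaternion.imJ_mul]
      norm_num [Q1, Q4, e1, e2, e3, hc, hs]
      linear_combination (-2*cos (γ/2)*sin (γ/2) + 8*sin (α/2)^2*cos (γ/2)^3*sin (γ/2)
        - 2*cos (α/2)^2*cos (γ/2)*sin (γ/2)) * pa
    · rw [pow_one, Quaternion.imK_mul]
      norm_num [Q1, Q4, e3, hc, hs]
      linear_combination (-2*cos (α/2)*sin (α/2)*cos (γ/2)^2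
          - 4*cos (α/2)*sin (α/2)*cos (γ/2)^2*sin (γ/2)^2
          - 4*cos (α/2)*sin (α/2)*cos (γ/2)^4) * pa
        + (-4*cos (α/2)*sin (α/2)*cos (γ/2)^2) * pg
  have base2 : Pst α γ 2 := by
    refine ⟨?_, ?_, ?_⟩
    · rw [pow_two, mul_assoc, Quaternion.imI_mul, Quaternion.imI_mul, Quaternion.re_mul,
        Quaternion.imJ_mul, Quaternion.imK_mul]
      norm_num [Q1, Q4, e3, e5, hc, hs]
      linear_combination (2*cos (α/2)*sin (α/2)*cos (γ/2)*sin (γ/2)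
        - 2*cos (α/2)*sin (α/2)^3*cos (γ/2)*sin (γ/2)
        + 16*cos (α/2)*sin (α/2)^3*cos (γ/2)^3*sin (γ/2)
        + 8*cos (α/2)*sin (α/2)^3*cos (γ/2)^3*sin (γ/2)^3
        + 8*cos (α/2)*sin (α/2)^3*cos (γ/2)^5*sin (γ/2)
        - 2*cos (α/2)^3*sin (α/2)*cos (γ/2)*sin (γ/2)) * pa
        + (8*cos (α/2)*sin (α/2)^3*cos (γ/2)^3*sin (γ/2)) * pg
    · rw [pow_two, mul_assoc, Quaternion.imJ_mul, Quaternion.imI_mul, Quaternion.re_mul,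
        Quaternion.imJ_mul, Quaternion.imK_mul]
      norm_num [Q1, Q4, e3, e4, e5, hc, hs]
      linear_combination (-2*cos (γ/2)*sin (γ/2) - 4*sin (α/2)^2*cos (γ/2)*sin (γ/2)
        + 16*sin (α/2)^2*cos (γ/2)^3*sin (γ/2) + 8*sin (α/2)^2*cos (γ/2)^3*sin (γ/2)^3
        + 8*sin (α/2)^2*cos (γ/2)^5*sin (γ/2) - 32*sin (α/2)^4*cos (γ/2)^5*sin (γ/2)
        - 2*cos (α/2)^2*cos (γ/2)*sin (γ/2) - 2*cos (α/2)^2*sin (α/2)^2*cos (γ/2)*sin (γ/2)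
        + 16*cos (α/2)^2*sin (α/2)^2*cos (γ/2)^3*sin (γ/2)
        + 8*cos (α/2)^2*sin (α/2)^2*cos (γ/2)^3*sin (γ/2)^3
        + 8*cos (α/2)^2*sin (α/2)^2*cos (γ/2)^5*sin (γ/2)
        - 2*cos (α/2)^4*cos (γ/2)*sin (γ/2)) * pa
        + (8*sin (α/2)^2*cos (γ/2)^3*sin (γ/2) - 8*sin (α/2)^4*cos (γ/2)^3*sin (γ/2)) * pg
    · rw [pow_two, mul_assoc, Quaternion.imK_mul, Quaternion.imI_mul, Quaternion.re_mul,
        Quaternion.imJ_mul, Quaternion.imK_mul]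
      norm_num [Q1, Q4, e5, hc, hs]
      linear_combination (2*cos (α/2)*sin (α/2)*cos (γ/2)^2
        - 8*cos (α/2)*sin (α/2)*cos (γ/2)^2*sin (γ/2)^2 - 8*cos (α/2)*sin (α/2)*cos (γ/2)^4
        - 2*cos (α/2)*sin (α/2)^3*cos (γ/2)^2 - 8*cos (α/2)*sin (α/2)^3*cos (γ/2)^2*sin (γ/2)^2
        + 8*cos (α/2)*sin (α/2)^3*cos (γ/2)^4 + 24*cos (α/2)*sin (α/2)^3*cos (γ/2)^4*sin (γ/2)^2
        + 24*cos (α/2)*sin (α/2)^3*cos (γ/2)^6 - 2*cos (α/2)^3*sin (α/2)*cos (γ/2)^2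
        - 8*cos (α/2)^3*sin (α/2)*cos (γ/2)^2*sin (γ/2)^2
        - 8*cos (α/2)^3*sin (α/2)*cos (γ/2)^4) * pa
        + (-8*cos (α/2)*sin (α/2)*cos (γ/2)^2 + 24*cos (α/2)*sin (α/2)^3*cos (γ/2)^4) * pg
  -- the two-step recurrence
  have step : ∀ m : ℕ, Pst α γ (m+1) → Pst α γ (m+2) → Pst α γ (m+3) := by
    intro m h1 h2
    set x : ℝ := cos (γ/2) * sin (α/2) with hx
    have hQ : Q1 α γ ^ (m+3) * Q4 α γ
        = (2*(1-2*x^2)) • (Q1 α γ ^ (m+2) * Q4 α γ) - Q1 α γ ^ (m+1) * Q4 α γ := by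
      have hp : Q1 α γ ^ (m+3) = Q1 α γ ^ (m+1) * Q1 α γ ^ 2 := by
        rw [← pow_add]
      rw [hp, Q1_sq, mul_sub, mul_one, mul_smul_comm, ← pow_succ, sub_mul, smul_mul_assoc]
    obtain ⟨i1, j1, k1⟩ := h1
    obtain ⟨i2, j2, k2⟩ := h2
    have r1 : (U ℝ (2*(m:ℤ)+7)).eval x
        = (4*x^2-2) * (U ℝ (2*(m:ℤ)+5)).eval x - (U ℝ (2*(m:ℤ)+3)).eval x := by
      have h := U_eval_add_four x (2*(m:ℤ)+3)
      rw [show 2*(m:ℤ)+3+4 = 2*(m:ℤ)+7 by ring, show 2*(m:ℤ)+3+2 = 2*(m:ℤ)+5 by ring] at h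
      exact h
    have r2 : (U ℝ (2*(m:ℤ)+5)).eval x
        = (4*x^2-2) * (U ℝ (2*(m:ℤ)+3)).eval x - (U ℝ (2*(m:ℤ)+1)).eval x := by
      have h := U_eval_add_four x (2*(m:ℤ)+1)
      rw [show 2*(m:ℤ)+1+4 = 2*(m:ℤ)+5 by ring, show 2*(m:ℤ)+1+2 = 2*(m:ℤ)+3 by ring] at h
      exact h
    have r3 : (U ℝ (2*(m:ℤ)+6)).eval x
        = (4*x^2-2) * (U ℝ (2*(m:ℤ)+4)).eval x - (U ℝ (2*(m:ℤ)+2)).eval x := by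
      have h := U_eval_add_four x (2*(m:ℤ)+2)
      rw [show 2*(m:ℤ)+2+4 = 2*(m:ℤ)+6 by ring, show 2*(m:ℤ)+2+2 = 2*(m:ℤ)+4 by ring] at h
      exact h
    have s1 : (m+1) - 1 = m := rfl
    have s2 : (m+2) - 1 = m + 1 := rfl
    have s3 : (m+3) - 1 = m + 2 := rfl
    refine ⟨?_, ?_, ?_⟩ <;>
      [rw [hQ, Quaternion.imI_sub, Quaternion.imI_smul, smul_eq_mul, i1, i2];
       rw [hQ, Quaternion.imJ_sub, Quaternion.imJ_smul, smul_eq_mul, j1, j2];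
       rw [hQ, Quaternion.imK_sub, Quaternion.imK_smul, smul_eq_mul, k1, k2]] <;>
    · rw [s1, s2, s3]
      push_cast
      try simp only [← hx]
      simp only [show (2*((m:ℤ)+3)+1 : ℤ) = 2*(m:ℤ)+7 from by ring,
        show (2*((m:ℤ)+3)-1 : ℤ) = 2*(m:ℤ)+5 from by ring,
        show (2*((m:ℤ)+3) : ℤ) = 2*(m:ℤ)+6 from by ring,
        show (2*((m:ℤ)+2)+1 : ℤ) = 2*(m:ℤ)+5 from by ring,
        show (2*((m:ℤ)+2)-1 : ℤ) = 2*(m:ℤ)+3 from by ring,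
        show (2*((m:ℤ)+2) : ℤ) = 2*(m:ℤ)+4 from by ring,
        show (2*((m:ℤ)+1)+1 : ℤ) = 2*(m:ℤ)+3 from by ring,
        show (2*((m:ℤ)+1)-1 : ℤ) = 2*(m:ℤ)+1 from by ring,
        show (2*((m:ℤ)+1) : ℤ) = 2*(m:ℤ)+2 from by ring,
        show (2*(m:ℤ)+6+1 : ℤ) = 2*(m:ℤ)+7 from by ring,
        show (2*(m:ℤ)+6-1 : ℤ) = 2*(m:ℤ)+5 from by ring,
        show (2*(m:ℤ)+4+1 : ℤ) = 2*(m:ℤ)+5 from by ring,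
        show (2*(m:ℤ)+4-1 : ℤ) = 2*(m:ℤ)+3 from by ring,
        show (2*(m:ℤ)+2+1 : ℤ) = 2*(m:ℤ)+3 from by ring,
        show (2*(m:ℤ)+2-1 : ℤ) = 2*(m:ℤ)+1 from by ring]
      simp only [r1, r2, r3]
      simp only [pow_succ]
      ring
  intro m
  induction m with
  | zero => exact ⟨base1, base2⟩
  | succ k ih => exact ⟨ih.2, step k ih.1 ih.2⟩

theorem im_q_pow_j_mul_Q4 (α γ : ℝ) (j : ℕ) (hj : 1 ≤ j) :
    (Q1 α γ ^ j * Q4 α γ).imI =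
      (-1 : ℝ) ^ (j - 1) * sin (γ/2) * cos (α/2) *
        ((U ℝ (2 * (j : ℤ) + 1)).eval (cos (γ/2) * sin (α/2)) +
          2 * (U ℝ (2 * (j : ℤ) - 1)).eval (cos (γ/2) * sin (α/2))) ∧
    (Q1 α γ ^ j * Q4 α γ).imJ =
      (-1 : ℝ) ^ (j - 1) * sin (γ/2) *
        (2 * cos (γ/2) * (U ℝ (2 * (j : ℤ))).eval (cos (γ/2) * sin (α/2)) -
          sin (α/2) * ((U ℝ (2 * (j : ℤ) + 1)).eval (cos (γ/2) * sin (α/2)) +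
            2 * (U ℝ (2 * (j : ℤ) - 1)).eval (cos (γ/2) * sin (α/2)))) ∧
    (Q1 α γ ^ j * Q4 α γ).imK =
      (-1 : ℝ) ^ (j - 1) * cos (α/2) * cos (γ/2) *
        (U ℝ (2 * (j : ℤ) + 1)).eval (cos (γ/2) * sin (α/2)) := by
  obtain ⟨m, rfl⟩ : ∃ m, j = m + 1 := ⟨j - 1, by omega⟩
  exact (pst_all α γ m).1
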